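/- Let p be prime, (Â, φ̂) a finite alternate module, and A ≤ Â a subgroup of index p with induced form φ. If the kernel K_φ of (A, φ) is not contained in the kernel K_{φ̂} of (Â, φ̂), then K_{φ̂} ≤ K_φ, [K_φ : K_{φ̂}] = p, and √(|A||K_φ|) = √(|Â||K_{φ̂}|) (the Lagrangian cardinalities agree). -/

import Mathlib

/-- Let `A` be a subgroup of index `p` of a finite alternate module `(Ahat, φ̂)`, with the
induced form. If the kernel of the induced form is not contained in the kernel of `φ̂`,
then the kernels are nested the other way with index `p`, and the Lagrangian
cardinalities of the two modules agree. -/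
theorem index_p_extension_constant_lagrangians
    {Ahat : Type*} [AddCommGroup Ahat] [Fintype Ahat]
    (p : ℕ) (hp : p.Prime)
    (φ : Ahat → Ahat → AddCircle (1 : ℚ))
    (hL : ∀ a b c : Ahat, φ (a + b) c = φ a c + φ b c)
    (hR : ∀ a b c : Ahat, φ a (b + c) = φ a b + φ a c)
    (halt : ∀ a : Ahat, φ a a = 0)
    (A : AddSubgroup Ahat) (hidx : A.index = p)
    (hker : ¬ ({x : Ahat | x ∈ A ∧ ∀ y ∈ A, φ x y = 0} ⊆ {x : Ahat | ∀ y : Ahat, φ x y = 0})) :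
    ({x : Ahat | ∀ y : Ahat, φ x y = 0} ⊆ {x : Ahat | x ∈ A ∧ ∀ y ∈ A, φ x y = 0}) ∧
    Nat.card {x : Ahat | x ∈ A ∧ ∀ y ∈ A, φ x y = 0} =
      p * Nat.card {x : Ahat | ∀ y : Ahat, φ x y = 0} ∧
    Nat.card A * Nat.card {x : Ahat | x ∈ A ∧ ∀ y ∈ A, φ x y = 0} =
      Nat.card Ahat * Nat.card {x : Ahat | ∀ y : Ahat, φ x y = 0} := by
  classical
  haveI : Fact (0 < (1:ℚ)) := ⟨one_pos⟩
  haveI : Fact p.Prime := ⟨hp⟩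
  -- homs recording linearity
  have F : ∀ _ : Ahat, Ahat →+ AddCircle (1:ℚ) := fun x =>
    AddMonoidHom.mk' (φ x) (fun b c => hR x b c)
  have G : ∀ _ : Ahat, Ahat →+ AddCircle (1:ℚ) := fun y =>
    AddMonoidHom.mk' (fun x => φ x y) (fun a b => hL a b y)
  clear F G
  let F : Ahat → (Ahat →+ AddCircle (1:ℚ)) := fun x =>
    AddMonoidHom.mk' (φ x) (fun b c => hR x b c)
  let G : Ahat → (Ahat →+ AddCircle (1:ℚ)) := fun y =>
    AddMonoidHom.mk' (fun x => φ x y) (fun a b => hL a b y)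
  have hF : ∀ x y, F x y = φ x y := fun _ _ => rfl
  have hG : ∀ x y, G y x = φ x y := fun _ _ => rfl
  have hsymm : ∀ a b : Ahat, φ a b = - φ b a := by
    intro a b
    have h := halt (a + b)
    rw [hL, hR, hR, halt, halt, zero_add, add_zero] at h
    rw [eq_neg_iff_add_eq_zero, h]
  -- the two kernels as subgroups
  let Ksub : AddSubgroup Ahat :=
    { carrier := {x : Ahat | ∀ y : Ahat, φ x y = 0}
      zero_mem' := fun y => (G y).map_zero
      add_mem' := fun {a b} ha hb y => by
        have := (G y).map_add a b
        rw [hG, hG, hG, ha y, hb y, add_zero] at this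
        exact this
      neg_mem' := fun {a} ha y => by
        have := (G y).map_neg a
        rw [hG, hG, ha y, neg_zero] at this
        exact this }
  let KAsub : AddSubgroup Ahat :=
    { carrier := {x : Ahat | x ∈ A ∧ ∀ y ∈ A, φ x y = 0}
      zero_mem' := ⟨zero_mem A, fun y _ => (G y).map_zero⟩
      add_mem' := fun {a b} ha hb => ⟨add_mem ha.1 hb.1, fun y hy => by
        have := (G y).map_add a b
        rw [hG, hG, hG, ha.2 y hy, hb.2 y hy, add_zero] at this
        exact this⟩
      neg_mem' := fun {a} ha => ⟨neg_mem ha.1, fun y hy => by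
        have := (G y).map_neg a
        rw [hG, hG, ha.2 y hy, neg_zero] at this
        exact this⟩ }
  -- A together with any element outside it generates everything
  have hptop : ∀ x : Ahat, x ∉ A → A ⊔ AddSubgroup.zmultiples x = ⊤ := by
    intro x hx
    set B := A ⊔ AddSubgroup.zmultiples x with hB
    have hAB : A ≤ B := le_sup_left
    have hdvd : B.index ∣ p := hidx ▸ AddSubgroup.index_dvd_of_le hAB
    rcases (hp.eq_one_or_self_of_dvd _ hdvd) with h1 | hpp
    · exact AddSubgroup.index_eq_one.mp h1
    · exfalso
      have hrel := AddSubgroup.relIndex_mul_index hAB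
      rw [hidx, hpp] at hrel
      have h1 : A.relIndex B = 1 :=
        Nat.eq_of_mul_eq_mul_right hp.pos (by rw [hrel, one_mul])
      have hBA : B ≤ A := AddSubgroup.relIndex_eq_one.mp h1
      exact hx (hBA ((le_sup_right : _ ≤ B) (AddSubgroup.mem_zmultiples x)))
  have hdecomp : ∀ x : Ahat, x ∉ A → ∀ y : Ahat, ∃ a ∈ A, ∃ n : ℤ, a + n • x = y := by
    intro x hx y
    have hy : y ∈ A ⊔ AddSubgroup.zmultiples x := by rw [hptop x hx]; trivial
    rw [AddSubgroup.mem_sup] at hy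
    obtain ⟨a, ha, b, hb, hab⟩ := hy
    obtain ⟨n, rfl⟩ := hb
    exact ⟨a, ha, n, hab⟩
  -- the witness of non-inclusion
  obtain ⟨z₀, hz₀KA, hz₀K⟩ := Set.not_subset.mp hker
  simp only [Set.mem_setOf_eq] at hz₀KA hz₀K
  -- Part 1: Ksub ⊆ KAsub
  have hKA : ∀ x : Ahat, (∀ y : Ahat, φ x y = 0) → x ∈ A := by
    intro x hx
    by_contra hxA
    apply hz₀K
    intro y
    obtain ⟨a, ha, n, rfl⟩ := hdecomp x hxA y
    have h1 : φ z₀ (a + n • x) = φ z₀ a + n • φ z₀ x := by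
      rw [← hF, (F z₀).map_add, (F z₀).map_zsmul, hF, hF]
    have h2 : φ z₀ x = 0 := by
      rw [hsymm, hx z₀, neg_zero]
    rw [h1, h2, hz₀KA.2 a ha, smul_zero, add_zero]
  have hKle : Ksub ≤ KAsub := fun x hx => ⟨hKA x hx, fun y _ => hx y⟩
  -- pick w outside A
  have hAne : A ≠ ⊤ := by
    intro h
    rw [h, AddSubgroup.index_top] at hidx
    exact hp.one_lt.ne' hidx.symm
  obtain ⟨w, hw⟩ : ∃ w : Ahat, w ∉ A := by
    by_contra h
    push_neg at h
    exact hAne ((AddSubgroup.eq_top_iff' A).mpr h)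
  -- the homomorphism z ↦ φ z w on KAsub
  let g : KAsub →+ AddCircle (1:ℚ) :=
    AddMonoidHom.mk' (fun z => φ z.1 w) (fun z₁ z₂ => hL z₁.1 z₂.1 w)
  have hgval : ∀ z : KAsub, g z = φ z.1 w := fun _ => rfl
  -- every value of g is p-torsion
  have hpw : p • w ∈ A := by
    have := AddSubgroup.nsmul_index_mem A w
    rwa [hidx] at this
  have htor : ∀ z : KAsub, p • g z = 0 := by
    intro z
    have h1 : φ z.1 (p • w) = p • φ z.1 w := by
      rw [← hF, (F z.1).map_nsmul, hF]
    rw [hgval, ← h1, z.2.2 (p • w) hpw]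
  -- z₀ as element of KAsub, with g z₀ ≠ 0
  have hz₀mem : z₀ ∈ KAsub := hz₀KA
  have hgz₀ : φ z₀ w ≠ 0 := by
    intro h0
    apply hz₀K
    intro y
    obtain ⟨a, ha, n, rfl⟩ := hdecomp w hw y
    have h1 : φ z₀ (a + n • w) = φ z₀ a + n • φ z₀ w := by
      rw [← hF, (F z₀).map_add, (F z₀).map_zsmul, hF, hF]
    rw [h1, h0, hz₀KA.2 a ha, smul_zero, add_zero]
  set u : AddCircle (1:ℚ) := φ z₀ w with hu
  have hordu : addOrderOf u = p := by
    have hdvd : addOrderOf u ∣ p :=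
      addOrderOf_dvd_of_nsmul_eq_zero (htor ⟨z₀, hz₀mem⟩)
    rcases hp.eq_one_or_self_of_dvd _ hdvd with h1 | h
    · exact absurd (AddMonoid.addOrderOf_eq_one_iff.mp h1) hgz₀
    · exact h
  -- every p-torsion element of the circle lies in zmultiples u
  have hcyc : ∀ t : AddCircle (1:ℚ), p • t = 0 → t ∈ AddSubgroup.zmultiples u := by
    intro t ht
    have hdvd : addOrderOf t ∣ p := addOrderOf_dvd_of_nsmul_eq_zero ht
    rcases hp.eq_one_or_self_of_dvd _ hdvd with h1 | hop
    · rw [AddMonoid.addOrderOf_eq_one_iff.mp h1]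
      exact zero_mem _
    · obtain ⟨k, hk, hkgcd, hku⟩ := (AddCircle.addOrderOf_eq_pos_iff hp.pos).mp hordu
      obtain ⟨m, hm, hmgcd, hmt⟩ := (AddCircle.addOrderOf_eq_pos_iff hp.pos).mp hop
      have hkz : (k : ZMod p) ≠ 0 := by
        intro h0
        have hpk : p ∣ k := (ZMod.natCast_eq_zero_iff k p).mp h0
        have hk0 : k = 0 := Nat.eq_zero_of_dvd_of_lt hpk hk
        rw [hk0, Nat.gcd_zero_left] at hkgcd
        exact hp.one_lt.ne' hkgcd
      set c : ZMod p := (m : ZMod p) * (k : ZMod p)⁻¹ with hc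
      set n : ℕ := c.val with hn
      haveI : NeZero p := ⟨hp.pos.ne'⟩
      have hnc : ((n : ℕ) : ZMod p) = c := by
        rw [hn, ZMod.natCast_val, ZMod.cast_id]
      have hnk : ((n * k : ℕ) : ZMod p) = (m : ZMod p) := by
        push_cast
        rw [hnc, hc, mul_assoc, inv_mul_cancel₀ hkz, mul_one]
      have hdvd2 : (p : ℤ) ∣ ((n : ℤ) * k - m) := by
        rw [← ZMod.intCast_zmod_eq_zero_iff_dvd]
        push_cast
        rw [show ((n : ZMod p) * (k : ZMod p) - (m : ZMod p)) = 0 from by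
          have := hnk; push_cast at this; rw [this]; ring]
      obtain ⟨j, hj⟩ := hdvd2
      rw [AddSubgroup.mem_zmultiples_iff]
      refine ⟨(n : ℤ), ?_⟩
      rw [← hku, ← hmt, ← AddCircle.coe_zsmul]
      rw [← sub_eq_zero, ← AddCircle.coe_sub, AddCircle.coe_eq_zero_iff]
      refine ⟨j, ?_⟩
      have hpq : (p : ℚ) ≠ 0 := Nat.cast_ne_zero.mpr hp.pos.ne'
      have : ((n : ℤ) * k - m : ℚ) = (p : ℚ) * (j : ℚ) := by
        exact_mod_cast congrArg (fun z : ℤ => (z : ℚ)) hj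
      simp only [zsmul_eq_mul, mul_one]
      field_simp
      push_cast at this ⊢
      linarith [this]
    -- end hcyc
  have hrange : g.range = AddSubgroup.zmultiples u := by
    apply le_antisymm
    · rintro _ ⟨z, rfl⟩
      exact hcyc _ (htor z)
    · rw [AddSubgroup.zmultiples_le]
      exact ⟨⟨z₀, hz₀mem⟩, rfl⟩
  have hkerg : g.ker = Ksub.addSubgroupOf KAsub := by
    ext z
    simp only [AddMonoidHom.mem_ker, AddSubgroup.mem_addSubgroupOf]
    constructor
    · intro h0 y
      obtain ⟨a, ha, nn, rfl⟩ := hdecomp w hw y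
      rw [hgval] at h0
      have h1 : φ z.1 (a + nn • w) = φ z.1 a + nn • φ z.1 w := by
        rw [← hF, (F z.1).map_add, (F z.1).map_zsmul, hF, hF]
      rw [h1, h0, smul_zero, add_zero, z.2.2 a ha]
    · intro h
      rw [hgval]
      exact h w
  have hkerindex : g.ker.index = p := by
    rw [AddSubgroup.index_ker, hrange, Nat.card_zmultiples, hordu]
  have hkercard : Nat.card g.ker = Nat.card Ksub := by
    rw [hkerg]
    exact Nat.card_congr (AddSubgroup.addSubgroupOfEquivOfLe hKle).toEquiv
  have hcard1 : Nat.card KAsub = p * Nat.card Ksub := by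
    have h1 := AddSubgroup.card_mul_index g.ker
    rw [hkerindex, hkercard] at h1
    rw [← h1, mul_comm]
  have hcardA : Nat.card A * p = Nat.card Ahat := by
    have := AddSubgroup.card_mul_index A
    rwa [hidx] at this
  refine ⟨fun x hx => hKle hx, ?_, ?_⟩
  · exact hcard1
  · show Nat.card A * Nat.card KAsub = Nat.card Ahat * Nat.card Ksub
    rw [hcard1, ← hcardA]
    ring
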